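/- Let H be a separable complex Hilbert space and let A be a bounded anti-linear operator on H. Let |A| be the unique positive bounded linear operator on H with |A|² = A^# A, i.e. ⟨|A|² x, y⟩ = ⟨A y, A x⟩ for all x, y ∈ H. Then there exists a unique anti-linear partial isometry J on H (an anti-linear map that is isometric on (ker J)ᗮ and vanishes on ker J) such that A = J ∘ |A| and ker J = ker A. -/

import Mathlib

open scoped InnerProductSpace
open ContinuousLinearMap TopologicalSpace

/-- A conjugation on a complex Hilbert space: an anti-linear, involutive map
satisfying `⟪C x, C y⟫ = ⟪y, x⟫`. -/
def Conjugation {K : Type*} [NormedAddCommGroup K] [InnerProductSpace ℂ K] (C : K → K) : Prop :=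
  (∀ (a : ℂ) (x y : K), C (a • x + y) = (starRingEnd ℂ) a • C x + C y) ∧
  (∀ x, C (C x) = x) ∧
  (∀ x y : K, ⟪C x, C y⟫_ℂ = ⟪y, x⟫_ℂ)

/-- `T` is `C`-normal: `C T*T C = T T*` (pointwise). -/
def CNormal {K : Type*} [NormedAddCommGroup K] [InnerProductSpace ℂ K] [CompleteSpace K]
    (C : K → K) (T : K →L[ℂ] K) : Prop :=
  ∀ x, C (adjoint T (T (C x))) = T (adjoint T x)

/-- Polar decomposition of a bounded anti-linear operator `A`: if `P = |A|` is the
positive operator with `⟪P² x, y⟫ = ⟪A y, A x⟫`, then there is a unique anti-linear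
partial isometry `J` with `A = J ∘ P` and `ker J = ker A`. -/
theorem stmt_2 {H : Type*} [NormedAddCommGroup H] [InnerProductSpace ℂ H] [CompleteSpace H]
    [SeparableSpace H]
    (A : H →SL[starRingEnd ℂ] H) (P : H →L[ℂ] H)
    (hP : P.IsPositive)
    (hPsq : ∀ x y : H, ⟪(P * P) x, y⟫_ℂ = ⟪A y, A x⟫_ℂ) :
    ∃! J : H → H,
      (∀ (a : ℂ) (x y : H), J (a • x + y) = (starRingEnd ℂ) a • J x + J y) ∧
      (∀ x : H, (∀ y : H, J y = 0 → ⟪x, y⟫_ℂ = 0) → ‖J x‖ = ‖x‖) ∧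
      (∀ x, A x = J (P x)) ∧
      {x : H | J x = 0} = {x : H | A x = 0} := by
  classical
  -- P is self-adjoint
  have hPsa : ∀ u v : H, ⟪P u, v⟫_ℂ = ⟪u, P v⟫_ℂ := by
    intro u v
    have hsa := hP.isSelfAdjoint
    rw [ContinuousLinearMap.isSelfAdjoint_iff'] at hsa
    conv_lhs => rw [← hsa]
    exact ContinuousLinearMap.adjoint_inner_left P v u
  -- ‖A x‖ = ‖P x‖
  have hnorm : ∀ x : H, ‖A x‖ = ‖P x‖ := by
    intro x
    have h1 : (⟪A x, A x⟫_ℂ) = ⟪P x, P x⟫_ℂ := by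
      rw [← hPsq x x]
      show ⟪P (P x), x⟫_ℂ = _
      rw [hPsa]
    have h3 : (‖A x‖ : ℝ) ^ 2 = ‖P x‖ ^ 2 := by
      have h2 := h1
      rw [inner_self_eq_norm_sq_to_K, inner_self_eq_norm_sq_to_K] at h2
      exact_mod_cast h2
    nlinarith [norm_nonneg (A x), norm_nonneg (P x)]
  have hAP : ∀ u v : H, P u = P v → A u = A v := by
    intro u v h
    have h0 : ‖A u - A v‖ = 0 := by
      rw [← map_sub A u v, hnorm, map_sub, h, sub_self, norm_zero]
    rwa [norm_eq_zero, sub_eq_zero] at h0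
  have hkerPA : ∀ x : H, P x = 0 ↔ A x = 0 := by
    intro x
    constructor
    · intro h; have h0 := hnorm x; rw [h, norm_zero, norm_eq_zero] at h0; exact h0
    · intro h; have h0 := hnorm x; rw [h, norm_zero] at h0
      exact norm_eq_zero.mp h0.symm
  -- the range of P and its closure
  set D : Submodule ℂ H := LinearMap.range (P : H →ₗ[ℂ] H) with hDdef
  have hmemD : ∀ x : H, P x ∈ D := fun x => ⟨x, rfl⟩
  have pick : ∀ y : D, ∃ x : H, P x = (y : H) := fun y => y.2
  let f : D → H := fun y => A (pick y).choose
  have hf_spec : ∀ y : D, P (pick y).choose = (y : H) := fun y => (pick y).choose_spec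
  have hf_eq : ∀ (y : D) (x : H), P x = (y : H) → f y = A x := by
    intro y x hx
    exact hAP _ _ (by rw [hf_spec y, hx])
  have hf_norm : ∀ y : D, ‖f y‖ = ‖(y : H)‖ := by
    intro y
    show ‖A (pick y).choose‖ = _
    rw [hnorm, hf_spec]
  let s0 : D →ₛₗ[starRingEnd ℂ] H :=
    { toFun := f
      map_add' := by
        intro y z
        have h1 : f (y + z) = A ((pick y).choose + (pick z).choose) := by
          apply hf_eq
          rw [map_add, hf_spec, hf_spec]; rfl
        show f (y + z) = f y + f z
        rw [h1, map_add]
      map_smul' := by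
        intro c y
        have h1 : f (c • y) = A (c • (pick y).choose) := by
          apply hf_eq
          rw [map_smul, hf_spec]; rfl
        show f (c • y) = (starRingEnd ℂ) c • f y
        rw [h1, A.map_smulₛₗ] }
  let s : D →SL[starRingEnd ℂ] H :=
    LinearMap.mkContinuous s0 1 (by
      intro y
      show ‖f y‖ ≤ 1 * ‖y‖
      rw [hf_norm, one_mul]
      rfl)
  set Dc : Submodule ℂ H := D.topologicalClosure with hDc
  haveI : CompleteSpace Dc := D.isClosed_topologicalClosure.completeSpace_coe
  let e : D →L[ℂ] Dc := D.subtypeL.codRestrict Dc (fun x => D.le_topologicalClosure x.2)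
  have he_isom : Isometry e := Isometry.of_dist_eq fun a b => rfl
  have h_dense : DenseRange e := by
    intro z
    have hz : (z : H) ∈ closure (D : Set H) := by
      have := z.2
      rwa [← Submodule.topologicalClosure_coe]
    obtain ⟨u, hu, hlim⟩ := mem_closure_iff_seq_limit.mp hz
    rw [mem_closure_iff_seq_limit]
    refine ⟨fun n => e ⟨u n, hu n⟩, fun n => ⟨_, rfl⟩, ?_⟩
    rw [tendsto_subtype_rng]
    exact hlim
  let ext : Dc →SL[starRingEnd ℂ] H := s.extend e
  have hext_eq : ∀ y : D, ext (e y) = s y := fun y =>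
    ContinuousLinearMap.extend_eq s h_dense he_isom.isUniformInducing y
  have hext_norm : ∀ z : Dc, ‖ext z‖ = ‖z‖ := by
    have hcl : IsClosed {z : Dc | ‖ext z‖ = ‖z‖} :=
      isClosed_eq ext.continuous.norm continuous_norm
    intro z
    refine h_dense.induction_on z hcl ?_
    intro y
    show ‖ext (e y)‖ = ‖e y‖
    rw [hext_eq]
    exact hf_norm y
  let J : H → H := fun x => ext (Submodule.orthogonalProjection Dc x)
  have hJP : ∀ x, A x = J (P x) := by
    intro x
    have hmemc : P x ∈ Dc := D.le_topologicalClosure (hmemD x)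
    have hproj : (Submodule.orthogonalProjection Dc (P x) : H) = P x :=
      Submodule.starProjection_eq_self_iff.mpr hmemc
    have heq : Submodule.orthogonalProjection Dc (P x) = e ⟨P x, hmemD x⟩ := Subtype.ext (by
      rw [hproj]; rfl)
    show A x = ext (Submodule.orthogonalProjection Dc (P x))
    rw [heq, hext_eq]
    exact (hf_eq ⟨P x, hmemD x⟩ x rfl).symm
  -- kernel characterizations
  have hker : ∀ x : H, J x = 0 ↔ x ∈ Dcᗮ := by
    intro x
    constructor
    · intro h
      have h' : ext (Submodule.orthogonalProjection Dc x) = 0 := h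
      have h0 : ‖(Submodule.orthogonalProjection Dc x : Dc)‖ = 0 := by
        rw [← hext_norm, h', norm_zero]
      have h1 : Submodule.orthogonalProjection Dc x = 0 := norm_eq_zero.mp h0
      exact Submodule.orthogonalProjectionOnto_eq_zero_iff.mp h1
    · intro h
      show ext (Submodule.orthogonalProjection Dc x) = 0
      rw [Submodule.orthogonalProjectionOnto_eq_zero_iff.mpr h, map_zero]
  have hDcperp : ∀ x : H, x ∈ Dcᗮ ↔ A x = 0 := by
    haveI : CompleteSpace (Dᗮ : Submodule ℂ H) := D.isClosed_orthogonal.completeSpace_coe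
    haveI : Submodule.HasOrthogonalProjection (Dᗮ : Submodule ℂ H) :=
      Submodule.HasOrthogonalProjection.ofCompleteSpace _
    have horth : Dcᗮ = Dᗮ := by
      rw [hDc, ← D.orthogonal_orthogonal_eq_closure, Submodule.orthogonal_orthogonal]
    intro x
    rw [horth]
    constructor
    · intro h
      have h1 : ⟪P x, P x⟫_ℂ = 0 := by
        have := (Submodule.mem_orthogonal D x).mp h (P (P x)) (hmemD _)
        rwa [hPsa] at this
      exact (hkerPA x).mp (inner_self_eq_zero.mp h1)
    · intro h
      rw [Submodule.mem_orthogonal]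
      rintro u ⟨y, rfl⟩
      have hPx : P x = 0 := (hkerPA x).mpr h
      show ⟪P y, x⟫_ℂ = 0
      rw [hPsa, hPx, inner_zero_right]
  have hkerJ : ∀ x : H, J x = 0 ↔ A x = 0 := fun x => (hker x).trans (hDcperp x)
  refine ⟨J, ⟨?_, ?_, hJP, Set.ext fun x => hkerJ x⟩, ?_⟩
  · -- anti-linearity
    intro a x y
    show ext (Submodule.orthogonalProjection Dc (a • x + y)) = _
    rw [map_add, map_smul, map_add, ext.map_smulₛₗ]
  · -- partial isometry
    intro x hx
    have hxDc : x ∈ Dc := by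
      rw [← Dc.orthogonal_orthogonal]
      rw [Submodule.mem_orthogonal]
      intro u hu
      exact inner_eq_zero_symm.mp (hx u ((hker u).mpr hu))
    have hproj : (Submodule.orthogonalProjection Dc x : H) = x :=
      Submodule.starProjection_eq_self_iff.mpr hxDc
    calc ‖J x‖ = ‖(Submodule.orthogonalProjection Dc x : Dc)‖ := hext_norm _
      _ = ‖x‖ := by
          show ‖((Submodule.orthogonalProjection Dc x : Dc) : H)‖ = ‖x‖
          rw [hproj]
  · -- uniqueness
    rintro J' ⟨h1', h2', h3', h4'⟩
    funext x
    have hJ'A : ∀ y : H, J' y = 0 ↔ A y = 0 := fun y => Set.ext_iff.mp h4' y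
    have hJ'sub : ∀ u v : H, J' (u - v) = J' u - J' v := by
      intro u v
      have h := h1' (-1 : ℂ) v u
      simp only [neg_smul, one_smul, map_neg, map_one] at h
      rw [neg_add_eq_sub] at h
      rw [h, neg_add_eq_sub]
    set u : H := (Submodule.orthogonalProjection Dc x : H) with hu_def
    have huDc : u ∈ Dc := SetLike.coe_mem _
    have hvperp : x - u ∈ Dcᗮ := Submodule.sub_starProjection_mem_orthogonal x
    have hvA : A (x - u) = 0 := (hDcperp _).mp hvperp
    -- J' x = J' u and J x = J u
    have hx_eq : x = (1 : ℂ) • u + (x - u) := by rw [one_smul]; abel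
    have hJ'x : J' x = J' u := by
      conv_lhs => rw [hx_eq]
      rw [h1', (hJ'A _).mpr hvA, map_one, one_smul, add_zero]
    have hJx : J x = J u := by
      have : Submodule.orthogonalProjection Dc u = Submodule.orthogonalProjection Dc x := Subtype.ext (by
        exact Submodule.starProjection_eq_self_iff.mpr huDc)
      show ext (Submodule.orthogonalProjection Dc x) = ext (Submodule.orthogonalProjection Dc u)
      rw [this]
    rw [hJ'x, hJx]
    -- now show J' u = J u by density
    have huC : u ∈ closure (D : Set H) := by
      have := huDc
      rwa [← Submodule.topologicalClosure_coe]
    obtain ⟨w, hw, hlim⟩ := mem_closure_iff_seq_limit.mp huC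
    have hagree : ∀ n, J' (w n) = J (w n) := by
      intro n
      obtain ⟨z, hz⟩ := hw n
      rw [← hz]
      show J' (P z) = J (P z)
      rw [← h3' z, hJP z]
    have hJ'norm : ∀ n, ‖J' (w n) - J' u‖ = ‖w n - u‖ := by
      intro n
      rw [← hJ'sub]
      apply h2'
      intro y hy
      have hyDc : y ∈ Dcᗮ := (hDcperp y).mpr ((hJ'A y).mp hy)
      have hmem : w n - u ∈ Dc := Dc.sub_mem (D.le_topologicalClosure (hw n)) huDc
      exact (Submodule.mem_orthogonal Dc y).mp hyDc _ hmem
    have hJ'lim : Filter.Tendsto (fun n => J' (w n)) Filter.atTop (nhds (J' u)) := by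
      rw [tendsto_iff_dist_tendsto_zero]
      have : ∀ n, dist (J' (w n)) (J' u) = dist (w n) u := by
        intro n
        rw [dist_eq_norm, dist_eq_norm, hJ'norm]
      simp only [this]
      exact tendsto_iff_dist_tendsto_zero.mp hlim
    have hJcont : Continuous J := ext.continuous.comp (Submodule.orthogonalProjection Dc).continuous
    have hJlim : Filter.Tendsto (fun n => J (w n)) Filter.atTop (nhds (J u)) :=
      (hJcont.tendsto u).comp hlim
    have hJ'lim' : Filter.Tendsto (fun n => J (w n)) Filter.atTop (nhds (J' u)) := by
      have := hJ'lim
      simp only [hagree] at this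
      exact this
    exact tendsto_nhds_unique hJ'lim' hJlim
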